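/- Let k be a field, A = k[X,Y], and F ∈ A a rectangular element: there exist m,n ≥ 1 with (m,n) in the support of F with respect to (X,Y) and the support contained in [0,m]×[0,n]. If (U,V) is another pair with A = k[U,V] and F is rectangular with respect to (U,V) (with corresponding pair (m',n')), then either (U,V) = (aX+b, cY+d) or (U,V) = (cY+d, aX+b) for some a,b,c,d ∈ k with ac ≠ 0. Consequently {m',n'} = {m,n}. -/

import Mathlib

open MvPolynomial

variable {k : Type} [Field k]

private lemma fin2_ext {d e : Fin 2 →₀ ℕ} (h0 : d 0 = e 0) (h1 : d 1 = e 1) : d = e := by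
  ext i; fin_cases i <;> assumption

private lemma deg_fin2 (d : Fin 2 →₀ ℕ) : (d.sum fun _ e => e) = d 0 + d 1 := by
  rw [Finsupp.sum_fintype _ _ (fun _ => rfl), Fin.sum_univ_two]

private lemma fdeg_fin2 (d : Fin 2 →₀ ℕ) : Finsupp.degree d = d 0 + d 1 := by
  rw [show Finsupp.degree d = d.sum fun _ e => e from rfl, deg_fin2]

private lemma le_totalDegree' {p : MvPolynomial (Fin 2) k} {d : Fin 2 →₀ ℕ}
    (h : coeff d p ≠ 0) : d 0 + d 1 ≤ p.totalDegree := by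
  rw [← deg_fin2]
  exact le_totalDegree (mem_support_iff.mpr h)

private lemma homogComp_top_ne_zero {p : MvPolynomial (Fin 2) k} (hp : p ≠ 0) :
    homogeneousComponent p.totalDegree p ≠ 0 := by
  obtain ⟨d, hd, hdeg⟩ := Finset.exists_mem_eq_sup p.support
    (Finset.nonempty_iff_ne_empty.mpr (by rwa [Ne, support_eq_empty])) (fun s => s.sum fun _ e => e)
  intro h
  have hc : coeff d (homogeneousComponent p.totalDegree p) = coeff d p := by
    rw [coeff_homogeneousComponent, if_pos]
    exact (show Finsupp.degree d = d.sum fun _ e => e from rfl).trans hdeg.symm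
  rw [h, coeff_zero] at hc
  exact (mem_support_iff.mp hd) hc.symm

private lemma totalDegree_mul_eq {p q : MvPolynomial (Fin 2) k} (hp : p ≠ 0) (hq : q ≠ 0) :
    (p * q).totalDegree = p.totalDegree + q.totalDegree := by
  refine le_antisymm (totalDegree_mul p q) ?_
  set dp := p.totalDegree with hdp
  set dq := q.totalDegree with hdq
  set a := homogeneousComponent dp p with hadef
  set b := homogeneousComponent dq q with hbdef
  have hab : a * b ≠ 0 := mul_ne_zero (homogComp_top_ne_zero hp) (homogComp_top_ne_zero hq)
  obtain ⟨d, hd⟩ := ne_zero_iff.mp hab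
  have hdeg : d 0 + d 1 = dp + dq := by
    rw [coeff_mul] at hd
    obtain ⟨x, hx, hxne⟩ := Finset.exists_ne_zero_of_sum_ne_zero hd
    rw [Finset.HasAntidiagonal.mem_antidiagonal] at hx
    have h1 : coeff x.1 a ≠ 0 := left_ne_zero_of_mul hxne
    have h2 : coeff x.2 b ≠ 0 := right_ne_zero_of_mul hxne
    rw [hadef, coeff_homogeneousComponent] at h1
    rw [hbdef, coeff_homogeneousComponent] at h2
    by_cases e1 : Finsupp.degree x.1 = dp
    · by_cases e2 : Finsupp.degree x.2 = dq
      · rw [fdeg_fin2] at e1 e2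
        have : d 0 + d 1 = (x.1 0 + x.1 1) + (x.2 0 + x.2 1) := by
          rw [← hx]; simp only [Finsupp.add_apply]; ring
        omega
      · rw [if_neg e2] at h2; exact absurd rfl h2
    · rw [if_neg e1] at h1; exact absurd rfl h1
  have hco : coeff d (p * q) = coeff d (a * b) := by
    rw [coeff_mul, coeff_mul]
    refine Finset.sum_congr rfl fun x hx => ?_
    rw [Finset.HasAntidiagonal.mem_antidiagonal] at hx
    have hsum : (x.1 0 + x.1 1) + (x.2 0 + x.2 1) = dp + dq := by
      rw [← hdeg, ← hx]; simp only [Finsupp.add_apply]; ring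
    have ca : coeff x.1 a = if Finsupp.degree x.1 = dp then coeff x.1 p else 0 :=
      coeff_homogeneousComponent _ _ _
    have cb : coeff x.2 b = if Finsupp.degree x.2 = dq then coeff x.2 q else 0 :=
      coeff_homogeneousComponent _ _ _
    by_cases hc1 : coeff x.1 p = 0
    · rw [hc1, zero_mul, ca, hc1]
      simp
    · by_cases hc2 : coeff x.2 q = 0
      · rw [hc2, mul_zero, cb, hc2]
        simp
      · have d1 : x.1 0 + x.1 1 ≤ dp := le_totalDegree' hc1
        have d2 : x.2 0 + x.2 1 ≤ dq := le_totalDegree' hc2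
        have e1 : Finsupp.degree x.1 = dp := by rw [fdeg_fin2]; omega
        have e2 : Finsupp.degree x.2 = dq := by rw [fdeg_fin2]; omega
        rw [ca, cb, if_pos e1, if_pos e2]
  have : coeff d (p * q) ≠ 0 := by rw [hco]; exact hd
  calc dp + dq = d 0 + d 1 := hdeg.symm
    _ ≤ (p * q).totalDegree := le_totalDegree' this
private lemma totalDegree_pow_eq {p : MvPolynomial (Fin 2) k} (hp : p ≠ 0) (r : ℕ) :
    (p ^ r).totalDegree = r * p.totalDegree := by
  induction r with
  | zero => simp
  | succ r ih =>
    rw [pow_succ, totalDegree_mul_eq (pow_ne_zero _ hp) hp, ih]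
    ring

private lemma aeval_monomial_fin2 (P Q : MvPolynomial (Fin 2) k) (d : Fin 2 →₀ ℕ) (c : k) :
    aeval ![P, Q] (monomial d c) = C c * (P ^ (d 0) * Q ^ (d 1)) := by
  rw [aeval_monomial, algebraMap_eq]
  congr 1
  rw [Finsupp.prod_fintype _ _ (fun i => pow_zero _), Fin.prod_univ_two]
  simp

/-- Core lemma: degree of a rectangular polynomial after substitution. -/
private lemma degL (G : MvPolynomial (Fin 2) k) (m' n' : ℕ) (hm' : 1 ≤ m') (hn' : 1 ≤ n')
    (hmem : coeff (Finsupp.single 0 m' + Finsupp.single 1 n') G ≠ 0)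
    (hsupp : ∀ d ∈ G.support, d 0 ≤ m' ∧ d 1 ≤ n')
    (P Q : MvPolynomial (Fin 2) k) (hP : 1 ≤ P.totalDegree) (hQ : 1 ≤ Q.totalDegree) :
    (aeval ![P, Q] G).totalDegree = m' * P.totalDegree + n' * Q.totalDegree := by
  classical
  have hP0 : P ≠ 0 := by rintro rfl; simp at hP
  have hQ0 : Q ≠ 0 := by rintro rfl; simp at hQ
  set d₀ : Fin 2 →₀ ℕ := Finsupp.single 0 m' + Finsupp.single 1 n' with hd₀
  have hd₀0 : d₀ 0 = m' := by simp [hd₀, Finsupp.single_apply]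
  have hd₀1 : d₀ 1 = n' := by simp [hd₀, Finsupp.single_apply]
  set T : MvPolynomial (Fin 2) k := monomial d₀ (coeff d₀ G) with hT
  set D := m' * P.totalDegree + n' * Q.totalDegree with hD
  have hdegT : (aeval ![P, Q] T).totalDegree = D := by
    rw [hT, aeval_monomial_fin2, hd₀0, hd₀1]
    rw [totalDegree_mul_eq (C_ne_zero.mpr hmem)
      (mul_ne_zero (pow_ne_zero _ hP0) (pow_ne_zero _ hQ0)),
      totalDegree_C,
      totalDegree_mul_eq (pow_ne_zero _ hP0) (pow_ne_zero _ hQ0),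
      totalDegree_pow_eq hP0, totalDegree_pow_eq hQ0]
    omega
  have hrest : (aeval ![P, Q] (G - T)).totalDegree < D := by
    have hDpos : 0 < D := by
      have : 1 * 1 ≤ m' * P.totalDegree := Nat.mul_le_mul hm' hP
      omega
    have hbound : ∀ d ∈ (G - T).support,
        (aeval ![P, Q] (monomial d (coeff d (G - T)))).totalDegree < D := by
      intro d hdm
      have hco : coeff d (G - T) ≠ 0 := mem_support_iff.mp hdm
      have hdne : d ≠ d₀ := by
        rintro rfl
        apply hco
        rw [coeff_sub, hT, coeff_monomial, if_pos rfl, sub_self]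
      have hcoG : coeff d (G - T) = coeff d G := by
        rw [coeff_sub, hT, coeff_monomial, if_neg (fun h => hdne h.symm), sub_zero]
      have hdG : d ∈ G.support := mem_support_iff.mpr (by rw [← hcoG]; exact hco)
      obtain ⟨h0, h1⟩ := hsupp d hdG
      have hne2 : ¬(d 0 = m' ∧ d 1 = n') := by
        rintro ⟨e0, e1⟩
        exact hdne (fin2_ext (by rw [e0, hd₀0]) (by rw [e1, hd₀1]))
      have hlt : d 0 * P.totalDegree + d 1 * Q.totalDegree < D := by
        rcases Nat.lt_or_ge (d 0) m' with h | h
        · have : (d 0 + 1) * P.totalDegree ≤ m' * P.totalDegree :=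
            Nat.mul_le_mul_right _ (by omega)
          have h2 : d 1 * Q.totalDegree ≤ n' * Q.totalDegree := Nat.mul_le_mul_right _ h1
          have h3 : 1 ≤ P.totalDegree := hP
          rw [add_mul, one_mul] at this
          omega
        · have e0 : d 0 = m' := le_antisymm h0 h
          have h1' : d 1 < n' := by
            rcases Nat.lt_or_ge (d 1) n' with h' | h'
            · exact h'
            · exact absurd ⟨e0, le_antisymm h1 h'⟩ hne2
          have : (d 1 + 1) * Q.totalDegree ≤ n' * Q.totalDegree :=
            Nat.mul_le_mul_right _ (by omega)
          rw [add_mul, one_mul] at this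
          have h3 : 1 ≤ Q.totalDegree := hQ
          have h4 : d 0 * P.totalDegree ≤ m' * P.totalDegree := Nat.mul_le_mul_right _ h0
          omega
      calc (aeval ![P, Q] (monomial d (coeff d (G - T)))).totalDegree
          ≤ d 0 * P.totalDegree + d 1 * Q.totalDegree := by
            rw [aeval_monomial_fin2]
            refine le_trans (totalDegree_mul _ _) ?_
            rw [totalDegree_C, zero_add]
            refine le_trans (totalDegree_mul _ _) ?_
            exact Nat.add_le_add (totalDegree_pow _ _) (totalDegree_pow _ _)
        _ < D := hlt
    calc (aeval ![P, Q] (G - T)).totalDegree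
        = (∑ d ∈ (G - T).support, aeval ![P, Q] (monomial d (coeff d (G - T)))).totalDegree := by
          rw [← map_sum, support_sum_monomial_coeff]
      _ < D := by
          apply Nat.lt_of_le_of_lt (totalDegree_finset_sum _ _)
          apply Finset.sup_lt_iff (by exact hDpos) |>.mpr
          exact hbound
  have hsplit : aeval ![P, Q] G = aeval ![P, Q] (G - T) + aeval ![P, Q] T := by
    rw [← map_add, sub_add_cancel]
  rw [hsplit, totalDegree_add_eq_right_of_totalDegree_lt (by rw [hdegT]; exact hrest), hdegT]
private lemma X_ne_C (i : Fin 2) (c : k) : (X i : MvPolynomial (Fin 2) k) ≠ C c := by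
  intro h
  have h1 : coeff (Finsupp.single i 1) (X i : MvPolynomial (Fin 2) k) = 1 := by rw [coeff_X i, if_pos rfl]
  rw [h, coeff_C, if_neg] at h1
  · exact one_ne_zero h1.symm
  · intro hc
    exact one_ne_zero (Finsupp.single_eq_zero.mp hc.symm)

private lemma eq_C_of_totalDegree_eq_zero {p : MvPolynomial (Fin 2) k}
    (h : p.totalDegree = 0) : p = C (coeff 0 p) := by
  classical
  apply MvPolynomial.ext
  intro d
  by_cases hd : d = 0
  · subst hd; rw [coeff_C, if_pos rfl]
  · rw [coeff_C, if_neg (fun hc => hd hc.symm)]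
    by_contra hc
    have := le_totalDegree' hc
    rw [h] at this
    exact hd (fin2_ext (by simp only [Finsupp.coe_zero, Pi.zero_apply]; omega) (by simp only [Finsupp.coe_zero, Pi.zero_apply]; omega))

private lemma affine_form {P : MvPolynomial (Fin 2) k} (h : P.totalDegree ≤ 1) :
    P = C (coeff (Finsupp.single 0 1) P) * X 0 +
        (C (coeff (Finsupp.single 1 1) P) * X 1 + C (coeff 0 P)) := by
  classical
  apply MvPolynomial.ext
  intro d
  rw [coeff_add, coeff_add, coeff_C_mul, coeff_C_mul, coeff_X', coeff_X', coeff_C]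
  have hs0 : (Finsupp.single (0 : Fin 2) 1) 0 = 1 := Finsupp.single_eq_same
  have hs01 : (Finsupp.single (0 : Fin 2) 1) 1 = 0 := Finsupp.single_eq_of_ne (by decide)
  have hs1 : (Finsupp.single (1 : Fin 2) 1) 1 = 1 := Finsupp.single_eq_same
  have hs10 : (Finsupp.single (1 : Fin 2) 1) 0 = 0 := Finsupp.single_eq_of_ne (by decide)
  by_cases h0 : d = 0
  · subst h0
    rw [if_neg (by intro hc; have := congrArg (fun f => f (0 : Fin 2)) hc; simp [hs0] at this),
        if_neg (by intro hc; have := congrArg (fun f => f (1 : Fin 2)) hc; simp [hs1] at this),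
        if_pos rfl]
    ring
  · by_cases h1 : d = Finsupp.single 0 1
    · subst h1
      rw [if_pos rfl,
        if_neg (by intro hc; have := congrArg (fun f => f (1 : Fin 2)) hc; simp [hs1, hs01] at this),
        if_neg (by intro hc; exact h0 hc.symm)]
      ring
    · by_cases h2 : d = Finsupp.single 1 1
      · subst h2
        rw [if_neg (by intro hc; have := congrArg (fun f => f (0 : Fin 2)) hc; simp [hs0, hs10] at this),
          if_pos rfl, if_neg (by intro hc; exact h0 hc.symm)]
        ring
      · rw [if_neg (fun hc => h1 hc.symm), if_neg (fun hc => h2 hc.symm),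
          if_neg (fun hc => h0 hc.symm)]
        by_contra hc
        have hb := le_totalDegree' (fun hz => hc (by rw [hz]; ring))
        have hle : d 0 + d 1 ≤ 1 := le_trans hb h
        -- d is 0, single 0 1, or single 1 1
        rcases Nat.le_one_iff_eq_zero_or_eq_one.mp hle with h' | h'
        · exact h0 (fin2_ext (by simp only [Finsupp.coe_zero, Pi.zero_apply]; omega) (by simp only [Finsupp.coe_zero, Pi.zero_apply]; omega))
        · rcases Nat.lt_or_ge (d 0) 1 with h'' | h''
          · exact h2 (fin2_ext (by omega) (by rw [hs1]; omega))
          · exact h1 (fin2_ext (by rw [hs0]; omega) (by rw [hs01]; omega))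

private lemma aeval_comp_fin2 (f : Fin 2 → MvPolynomial (Fin 2) k)
    (A B : MvPolynomial (Fin 2) k) (φ : MvPolynomial (Fin 2) k) :
    aeval f (aeval ![A, B] φ) = aeval ![aeval f A, aeval f B] φ := by
  have h := bind₁_bind₁ ![A, B] f φ
  simp only [bind₁] at h
  rw [h, show (fun i => aeval f (![A, B] i)) = ![aeval f A, aeval f B] by
    funext i; fin_cases i <;> simp]

private lemma deg_main {T : MvPolynomial (Fin 2) k} (i : Fin 2) {a : k} (ha : a ≠ 0) {r : ℕ}
    (hT : T.totalDegree < r) : (C a * X i ^ r + T).totalDegree = r := by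
  have h1 : (C a * X i ^ r : MvPolynomial (Fin 2) k) = monomial (Finsupp.single i r) a := by
    rw [C_mul_X_pow_eq_monomial]
  have hd1 : (C a * X i ^ r : MvPolynomial (Fin 2) k).totalDegree = r := by
    rw [h1, totalDegree_monomial _ ha, Finsupp.sum_single_index rfl]
  rw [totalDegree_add_eq_left_of_totalDegree_lt (by rw [hd1]; exact hT), hd1]

private lemma deg_tail_le (j : Fin 2) (b e : k) :
    (C b * X j + C e : MvPolynomial (Fin 2) k).totalDegree ≤ 1 := by
  refine le_trans (totalDegree_add _ _) ?_
  apply max_le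
  · refine le_trans (totalDegree_mul _ _) ?_
    rw [totalDegree_C, zero_add]
    exact le_trans (le_of_eq (totalDegree_X _)) le_rfl
  · rw [totalDegree_C]; omega
private lemma deg_lin (j : Fin 2) {b : k} (hb : b ≠ 0) (e : k) :
    (C b * X j + C e : MvPolynomial (Fin 2) k).totalDegree = 1 := by
  rw [show (C b * X j + C e : MvPolynomial (Fin 2) k) = C b * X j ^ 1 + C e by rw [pow_one]]
  exact deg_main j hb (by rw [totalDegree_C]; omega)

/-- If `F` is rectangular w.r.t. the standard coordinates `(X,Y)` with pair `(m,n)`,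
and `(U,V)` is another coordinate system w.r.t. which `F` is rectangular with pair `(m',n')`,
then `(U,V) = (aX+b, cY+d)` or `(cY+d, aX+b)` with `ac ≠ 0`, and `{m',n'} = {m,n}`. -/
theorem stmt4 (k : Type) [Field k] (F : MvPolynomial (Fin 2) k) (m n : ℕ)
    (hm : 1 ≤ m) (hn : 1 ≤ n)
    (hmem : MvPolynomial.coeff (Finsupp.single 0 m + Finsupp.single 1 n) F ≠ 0)
    (hsupp : ∀ d ∈ F.support, d 0 ≤ m ∧ d 1 ≤ n)
    (U V : MvPolynomial (Fin 2) k)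
    (hUV : Function.Bijective ⇑(MvPolynomial.aeval (R := k) ![U, V]))
    (G : MvPolynomial (Fin 2) k) (hG : MvPolynomial.aeval ![U, V] G = F)
    (m' n' : ℕ) (hm' : 1 ≤ m') (hn' : 1 ≤ n')
    (hmem' : MvPolynomial.coeff (Finsupp.single 0 m' + Finsupp.single 1 n') G ≠ 0)
    (hsupp' : ∀ d ∈ G.support, d 0 ≤ m' ∧ d 1 ≤ n') :
    (∃ a b c d : k, a * c ≠ 0 ∧
       ((U = C a * X 0 + C b ∧ V = C c * X 1 + C d) ∨
        (U = C c * X 1 + C d ∧ V = C a * X 0 + C b)))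
    ∧ ((m' = m ∧ n' = n) ∨ (m' = n ∧ n' = m)) := by
  classical
  have hXfun : (![(X 0 : MvPolynomial (Fin 2) k), X 1]) = X := by
    funext i; fin_cases i <;> rfl
  have hid : ∀ H : MvPolynomial (Fin 2) k, aeval ![X 0, X 1] H = H := by
    intro H; rw [hXfun]; exact aeval_X_left_apply H
  -- U, V are nonconstant
  have hU1 : 1 ≤ U.totalDegree := by
    by_contra h
    push_neg at h
    have h0 : U.totalDegree = 0 := by omega
    have hUC : U = C (coeff 0 U) := eq_C_of_totalDegree_eq_zero h0
    have heq : aeval ![U, V] ((X 0 : MvPolynomial (Fin 2) k)) = aeval ![U, V] ((C (coeff 0 U) : MvPolynomial (Fin 2) k)) := by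
      simp only [aeval_X, aeval_C, algebraMap_eq, Matrix.cons_val_zero]
      exact hUC
    exact X_ne_C 0 _ (hUV.injective heq)
  have hV1 : 1 ≤ V.totalDegree := by
    by_contra h
    push_neg at h
    have h0 : V.totalDegree = 0 := by omega
    have hVC : V = C (coeff 0 V) := eq_C_of_totalDegree_eq_zero h0
    have heq : aeval ![U, V] ((X 1 : MvPolynomial (Fin 2) k)) = aeval ![U, V] ((C (coeff 0 V) : MvPolynomial (Fin 2) k)) := by
      simp only [aeval_X, aeval_C, algebraMap_eq, Matrix.cons_val_one, Matrix.head_cons]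
      exact hVC
    exact X_ne_C 1 _ (hUV.injective heq)
  -- inverse coordinates
  let e : MvPolynomial (Fin 2) k ≃ₐ[k] MvPolynomial (Fin 2) k :=
    AlgEquiv.ofBijective _ hUV
  set U' : MvPolynomial (Fin 2) k := e.symm (X 0) with hU'def
  set V' : MvPolynomial (Fin 2) k := e.symm (X 1) with hV'def
  have heU' : aeval ![U, V] U' = X 0 := e.apply_symm_apply (X 0)
  have heV' : aeval ![U, V] V' = X 1 := e.apply_symm_apply (X 1)
  have hGF : aeval ![U', V'] F = G := by
    apply hUV.injective
    show aeval ![U, V] _ = aeval ![U, V] G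
    rw [hG, aeval_comp_fin2, heU', heV', hXfun]
    exact aeval_X_left_apply F
  have hU'1 : 1 ≤ U'.totalDegree := by
    by_contra h
    push_neg at h
    have h0 : U'.totalDegree = 0 := by omega
    have hC : U' = C (coeff 0 U') := eq_C_of_totalDegree_eq_zero h0
    refine X_ne_C 0 (coeff 0 U') ?_
    calc (X 0 : MvPolynomial (Fin 2) k) = aeval ![U, V] U' := heU'.symm
      _ = C (coeff 0 U') := by
          conv_lhs => rw [hC]
          rw [aeval_C, algebraMap_eq]
  have hV'1 : 1 ≤ V'.totalDegree := by
    by_contra h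
    push_neg at h
    have h0 : V'.totalDegree = 0 := by omega
    have hC : V' = C (coeff 0 V') := eq_C_of_totalDegree_eq_zero h0
    refine X_ne_C 1 (coeff 0 V') ?_
    calc (X 1 : MvPolynomial (Fin 2) k) = aeval ![U, V] V' := heV'.symm
      _ = C (coeff 0 V') := by
          conv_lhs => rw [hC]
          rw [aeval_C, algebraMap_eq]
  -- degree equations
  have E0 : F.totalDegree = m + n := by
    have h := degL F m n hm hn hmem hsupp (X 0) (X 1)
      (le_of_eq (totalDegree_X 0).symm) (le_of_eq (totalDegree_X 1).symm)
    rw [hid F, totalDegree_X, totalDegree_X] at h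
    omega
  have E0' : G.totalDegree = m' + n' := by
    have h := degL G m' n' hm' hn' hmem' hsupp' (X 0) (X 1)
      (le_of_eq (totalDegree_X 0).symm) (le_of_eq (totalDegree_X 1).symm)
    rw [hid G, totalDegree_X, totalDegree_X] at h
    omega
  have E1 : F.totalDegree = m' * U.totalDegree + n' * V.totalDegree := by
    rw [← hG]
    exact degL G m' n' hm' hn' hmem' hsupp' U V hU1 hV1
  have E2 : G.totalDegree = m * U'.totalDegree + n * V'.totalDegree := by
    rw [← hGF]
    exact degL F m n hm hn hmem hsupp U' V' hU'1 hV'1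
  -- conclude U,V have total degree 1
  have p1 : m' * 1 ≤ m' * U.totalDegree := Nat.mul_le_mul le_rfl hU1
  have q1 : n' * 1 ≤ n' * V.totalDegree := Nat.mul_le_mul le_rfl hV1
  have p2 : m * 1 ≤ m * U'.totalDegree := Nat.mul_le_mul le_rfl hU'1
  have q2 : n * 1 ≤ n * V'.totalDegree := Nat.mul_le_mul le_rfl hV'1
  have hsumeq : m' * U.totalDegree + n' * V.totalDegree = m' + n' := by omega
  have keyU : U.totalDegree = 1 := by
    by_contra h
    have h2 : 2 ≤ U.totalDegree := by omega
    have : m' * 2 ≤ m' * U.totalDegree := Nat.mul_le_mul le_rfl h2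
    omega
  have keyV : V.totalDegree = 1 := by
    by_contra h
    have h2 : 2 ≤ V.totalDegree := by omega
    have : n' * 2 ≤ n' * V.totalDegree := Nat.mul_le_mul le_rfl h2
    omega
  have hmn : m + n = m' + n' := by omega
  -- affine forms
  set a := coeff (Finsupp.single 0 1) U with hadef
  set b := coeff (Finsupp.single 1 1) U with hbdef
  set e1 := coeff 0 U with he1def
  set c1 := coeff (Finsupp.single 0 1) V with hc1def
  set d1 := coeff (Finsupp.single 1 1) V with hd1def
  set f1 := coeff 0 V with hf1def
  have haffU : U = C a * X 0 + (C b * X 1 + C e1) := affine_form (le_of_eq keyU)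
  have haffV : V = C c1 * X 0 + (C d1 * X 1 + C f1) := affine_form (le_of_eq keyV)
  -- substituted forms under X ↦ X^2
  have hSU : aeval (![X 0 ^ 2, X 1] : Fin 2 → MvPolynomial (Fin 2) k) U = C a * X 0 ^ 2 + (C b * X 1 + C e1) := by
    conv_lhs => rw [haffU]
    simp only [map_add, map_mul, aeval_C, aeval_X, algebraMap_eq,
      Matrix.cons_val_zero, Matrix.cons_val_one, Matrix.head_cons]
  have hSV : aeval (![X 0 ^ 2, X 1] : Fin 2 → MvPolynomial (Fin 2) k) V = C c1 * X 0 ^ 2 + (C d1 * X 1 + C f1) := by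
    conv_lhs => rw [haffV]
    simp only [map_add, map_mul, aeval_C, aeval_X, algebraMap_eq,
      Matrix.cons_val_zero, Matrix.cons_val_one, Matrix.head_cons]
  have hS'U : aeval (![X 0, X 1 ^ 2] : Fin 2 → MvPolynomial (Fin 2) k) U = C b * X 1 ^ 2 + (C a * X 0 + C e1) := by
    conv_lhs => rw [haffU]
    simp only [map_add, map_mul, aeval_C, aeval_X, algebraMap_eq,
      Matrix.cons_val_zero, Matrix.cons_val_one, Matrix.head_cons]
    ring
  have hS'V : aeval (![X 0, X 1 ^ 2] : Fin 2 → MvPolynomial (Fin 2) k) V = C d1 * X 1 ^ 2 + (C c1 * X 0 + C f1) := by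
    conv_lhs => rw [haffV]
    simp only [map_add, map_mul, aeval_C, aeval_X, algebraMap_eq,
      Matrix.cons_val_zero, Matrix.cons_val_one, Matrix.head_cons]
    ring
  have hcompS : aeval (![X 0 ^ 2, X 1] : Fin 2 → MvPolynomial (Fin 2) k) F
      = aeval ![aeval (![X 0 ^ 2, X 1] : Fin 2 → MvPolynomial (Fin 2) k) U,
                aeval (![X 0 ^ 2, X 1] : Fin 2 → MvPolynomial (Fin 2) k) V] G := by
    rw [← hG, aeval_comp_fin2]
  have hcompS' : aeval (![X 0, X 1 ^ 2] : Fin 2 → MvPolynomial (Fin 2) k) F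
      = aeval ![aeval (![X 0, X 1 ^ 2] : Fin 2 → MvPolynomial (Fin 2) k) U,
                aeval (![X 0, X 1 ^ 2] : Fin 2 → MvPolynomial (Fin 2) k) V] G := by
    rw [← hG, aeval_comp_fin2]
  have degSF : (aeval (![X 0 ^ 2, X 1] : Fin 2 → MvPolynomial (Fin 2) k) F).totalDegree = m * 2 + n * 1 := by
    have h := degL F m n hm hn hmem hsupp (X 0 ^ 2) (X 1)
      (by rw [totalDegree_X_pow]; omega) (le_of_eq (totalDegree_X 1).symm)
    rw [totalDegree_X_pow, totalDegree_X] at h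
    exact h
  have degS'F : (aeval (![X 0, X 1 ^ 2] : Fin 2 → MvPolynomial (Fin 2) k) F).totalDegree = m * 1 + n * 2 := by
    have h := degL F m n hm hn hmem hsupp (X 0) (X 1 ^ 2)
      (le_of_eq (totalDegree_X 0).symm) (by rw [totalDegree_X_pow]; omega)
    rw [totalDegree_X_pow, totalDegree_X] at h
    exact h
  -- a = 0 or c1 = 0
  have haorc : a = 0 ∨ c1 = 0 := by
    by_contra hno
    push_neg at hno
    obtain ⟨ha, hc⟩ := hno
    have dP : (aeval (![X 0 ^ 2, X 1] : Fin 2 → MvPolynomial (Fin 2) k) U).totalDegree = 2 := by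
      rw [hSU]; exact deg_main 0 ha (lt_of_le_of_lt (deg_tail_le 1 b e1) one_lt_two)
    have dQ : (aeval (![X 0 ^ 2, X 1] : Fin 2 → MvPolynomial (Fin 2) k) V).totalDegree = 2 := by
      rw [hSV]; exact deg_main 0 hc (lt_of_le_of_lt (deg_tail_le 1 d1 f1) one_lt_two)
    have h := degL G m' n' hm' hn' hmem' hsupp' _ _ (by rw [dP]; omega) (by rw [dQ]; omega)
    rw [← hcompS, degSF, dP, dQ] at h
    omega
  -- b = 0 or d1 = 0
  have hbord : b = 0 ∨ d1 = 0 := by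
    by_contra hno
    push_neg at hno
    obtain ⟨hb, hd⟩ := hno
    have dP : (aeval (![X 0, X 1 ^ 2] : Fin 2 → MvPolynomial (Fin 2) k) U).totalDegree = 2 := by
      rw [hS'U]; exact deg_main 1 hb (lt_of_le_of_lt (deg_tail_le 0 a e1) one_lt_two)
    have dQ : (aeval (![X 0, X 1 ^ 2] : Fin 2 → MvPolynomial (Fin 2) k) V).totalDegree = 2 := by
      rw [hS'V]; exact deg_main 1 hd (lt_of_le_of_lt (deg_tail_le 0 c1 f1) one_lt_two)
    have h := degL G m' n' hm' hn' hmem' hsupp' _ _ (by rw [dP]; omega) (by rw [dQ]; omega)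
    rw [← hcompS', degS'F, dP, dQ] at h
    omega
  -- U or V constant contradictions
  have hUconst : ¬(a = 0 ∧ b = 0) := by
    rintro ⟨ha0, hb0⟩
    have hUe : U = C e1 := by rw [haffU, ha0, hb0]; simp
    rw [hUe, totalDegree_C] at keyU
    exact absurd keyU (by omega)
  have hVconst : ¬(c1 = 0 ∧ d1 = 0) := by
    rintro ⟨hc0, hd0⟩
    have hVe : V = C f1 := by rw [haffV, hc0, hd0]; simp
    rw [hVe, totalDegree_C] at keyV
    exact absurd keyV (by omega)
  rcases haorc with ha0 | hc0 <;> rcases hbord with hb0 | hd0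
  · exact absurd ⟨ha0, hb0⟩ hUconst
  · -- a = 0, d1 = 0 : U = bY + e1, V = c1 X + f1
    have hb : b ≠ 0 := fun hb0 => hUconst ⟨ha0, hb0⟩
    have hc : c1 ≠ 0 := fun hc0 => hVconst ⟨hc0, hd0⟩
    have dP : (aeval (![X 0 ^ 2, X 1] : Fin 2 → MvPolynomial (Fin 2) k) U).totalDegree = 1 := by
      rw [hSU, ha0]
      simp only [C_0, zero_mul, zero_add]
      exact deg_lin 1 hb e1
    have dQ : (aeval (![X 0 ^ 2, X 1] : Fin 2 → MvPolynomial (Fin 2) k) V).totalDegree = 2 := by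
      rw [hSV]; exact deg_main 0 hc (lt_of_le_of_lt (deg_tail_le 1 d1 f1) one_lt_two)
    have h := degL G m' n' hm' hn' hmem' hsupp' _ _ (by rw [dP]) (by rw [dQ]; omega)
    rw [← hcompS, degSF, dP, dQ] at h
    constructor
    · refine ⟨c1, f1, b, e1, mul_ne_zero hc hb, Or.inr ⟨?_, ?_⟩⟩
      · rw [haffU, ha0]; simp only [C_0, zero_mul, zero_add]
      · rw [haffV, hd0]; simp only [C_0, zero_mul, zero_add]
    · exact Or.inr ⟨by omega, by omega⟩
  · -- c1 = 0, b = 0 : U = a X + e1, V = d1 Y + f1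
    have ha : a ≠ 0 := fun ha0 => hUconst ⟨ha0, hb0⟩
    have hd : d1 ≠ 0 := fun hd0 => hVconst ⟨hc0, hd0⟩
    have dP : (aeval (![X 0 ^ 2, X 1] : Fin 2 → MvPolynomial (Fin 2) k) U).totalDegree = 2 := by
      rw [hSU]; exact deg_main 0 ha (lt_of_le_of_lt (deg_tail_le 1 b e1) one_lt_two)
    have dQ : (aeval (![X 0 ^ 2, X 1] : Fin 2 → MvPolynomial (Fin 2) k) V).totalDegree = 1 := by
      rw [hSV, hc0]
      simp only [C_0, zero_mul, zero_add]
      exact deg_lin 1 hd f1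
    have h := degL G m' n' hm' hn' hmem' hsupp' _ _ (by rw [dP]; omega) (by rw [dQ])
    rw [← hcompS, degSF, dP, dQ] at h
    constructor
    · refine ⟨a, e1, d1, f1, mul_ne_zero ha hd, Or.inl ⟨?_, ?_⟩⟩
      · rw [haffU, hb0]; simp only [C_0, zero_mul, zero_add]
      · rw [haffV, hc0]; simp only [C_0, zero_mul, zero_add]
    · exact Or.inl ⟨by omega, by omega⟩
  · exact absurd ⟨hc0, hd0⟩ hVconst
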